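/- Let p be a prime and n ≥ 1. For 0 ≤ i ≤ n let g_i and d be (positive) integer powers of p such that ∏_{i=0}^{n} (|g_i|_p · d) = 1, where |g_i|_p = g_i^{−1}. Suppose there are parameters s₁, …, s_n ≥ s₀ := 1 such that s_i g_i ≤ s_{i+1} g_{i+1} for 0 ≤ i ≤ n−1. Then for all 1 ≤ k ≤ n, ( ∏_{i=0}^{k−1} d |g_i|_p )^{−1} ≤ max{ 1/(d |g₀|_p), |g_n|_p · d · ∏_{i=1}^{n−1} s_i }. -/

import Mathlib

/-- Let `p` be a prime and `n ≥ 1`. For `0 ≤ i ≤ n` let `g_i` and `d` be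
(positive) integer powers of `p` such that `∏_{i=0}^{n} (|g_i|_p · d) = 1`, where
`|g_i|_p = g_i⁻¹`. Suppose there are parameters `s₁, …, s_n ≥ s₀ := 1` such that
`s_i g_i ≤ s_{i+1} g_{i+1}` for `0 ≤ i ≤ n−1`. Then for all `1 ≤ k ≤ n`,
`(∏_{i=0}^{k−1} d |g_i|_p)⁻¹ ≤ max { 1/(d |g₀|_p), |g_n|_p · d · ∏_{i=1}^{n−1} s_i }`. -/
theorem stmt9 (p : ℕ) (hp : p.Prime) (n : ℕ) (hn : 1 ≤ n)
    (g : ℕ → ℝ) (d : ℝ)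
    (hg : ∀ i ≤ n, ∃ m : ℤ, g i = (p : ℝ) ^ m)
    (hd : ∃ m : ℤ, d = (p : ℝ) ^ m)
    (hprod : ∏ i ∈ Finset.range (n + 1), ((g i)⁻¹ * d) = 1)
    (s : ℕ → ℝ) (hs0 : s 0 = 1) (hs : ∀ i, 1 ≤ i → i ≤ n → 1 ≤ s i)
    (hmono : ∀ i < n, s i * g i ≤ s (i + 1) * g (i + 1)) :
    ∀ k, 1 ≤ k → k ≤ n →
      (∏ i ∈ Finset.range k, (d * (g i)⁻¹))⁻¹ ≤
        max (d * (g 0)⁻¹)⁻¹ ((g n)⁻¹ * d * ∏ i ∈ Finset.Ico 1 n, s i) := by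
  intro k hk1 hkn
  have hp0 : (0 : ℝ) < p := by exact_mod_cast hp.pos
  have hgpos : ∀ i ≤ n, 0 < g i := by
    intro i hi
    obtain ⟨m, hm⟩ := hg i hi
    rw [hm]; positivity
  have hdpos : 0 < d := by
    obtain ⟨m, hm⟩ := hd
    rw [hm]; positivity
  have hs1 : ∀ i ≤ n, 1 ≤ s i := by
    intro i hi
    rcases Nat.eq_zero_or_pos i with h | h
    · simp [h, hs0]
    · exact hs i h hi
  have chain : ∀ j i, j ≤ i → i ≤ n → s j * g j ≤ s i * g i := by
    intro j i hji
    induction i, hji using Nat.le_induction with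
    | base => intro _; exact le_refl _
    | succ m hm ih =>
      intro hmn
      exact le_trans (ih (by omega)) (hmono m (by omega))
  by_cases hcase : ∀ j < k, g j < d
  · -- all g j < d for j < k : bound by the left term of max
    refine le_max_of_le_left ?_
    have h0pos : 0 < d * (g 0)⁻¹ := by
      have := hgpos 0 (by omega); positivity
    apply inv_anti₀ h0pos
    have hsplit : (∏ i ∈ Finset.range 1, (d * (g i)⁻¹)) *
        (∏ i ∈ Finset.Ico 1 k, (d * (g i)⁻¹)) = ∏ i ∈ Finset.range k, (d * (g i)⁻¹) := by
      simp only [Finset.range_eq_Ico]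
      exact Finset.prod_Ico_consecutive (fun i => d * (g i)⁻¹) (Nat.zero_le 1) hk1
    have hone : 1 ≤ ∏ i ∈ Finset.Ico 1 k, (d * (g i)⁻¹) := by
      calc (1:ℝ) = ∏ _i ∈ Finset.Ico 1 k, (1:ℝ) := by simp
        _ ≤ ∏ i ∈ Finset.Ico 1 k, (d * (g i)⁻¹) := by
          apply Finset.prod_le_prod (fun i _ => zero_le_one)
          intro i hi
          simp only [Finset.mem_Ico] at hi
          have hgi := hgpos i (by omega)
          rw [← div_eq_mul_inv, le_div_iff₀ hgi, one_mul]
          exact le_of_lt (hcase i hi.2)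
    calc d * (g 0)⁻¹ = (∏ i ∈ Finset.range 1, (d * (g i)⁻¹)) * 1 := by simp
      _ ≤ (∏ i ∈ Finset.range 1, (d * (g i)⁻¹)) *
          (∏ i ∈ Finset.Ico 1 k, (d * (g i)⁻¹)) := by
          apply mul_le_mul_of_nonneg_left hone
          simp only [Finset.prod_range_one]
          positivity
      _ = ∏ i ∈ Finset.range k, (d * (g i)⁻¹) := hsplit
  · -- there is j < k with d ≤ g j
    push_neg at hcase
    obtain ⟨j, hjk, hjd⟩ := hcase
    refine le_max_of_le_right ?_
    have hsplit : (∏ i ∈ Finset.range k, (d * (g i)⁻¹)) *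
        (∏ i ∈ Finset.Ico k (n + 1), ((g i)⁻¹ * d)) = 1 := by
      have : (∏ i ∈ Finset.range k, ((g i)⁻¹ * d)) *
          (∏ i ∈ Finset.Ico k (n + 1), ((g i)⁻¹ * d)) = 1 := by
        rw [Finset.prod_range_mul_prod_Ico _ (by omega)]
        exact hprod
      rw [← this]
      congr 1
      exact Finset.prod_congr rfl fun i _ => mul_comm _ _
    have hinv : (∏ i ∈ Finset.range k, (d * (g i)⁻¹))⁻¹ =
        ∏ i ∈ Finset.Ico k (n + 1), ((g i)⁻¹ * d) :=
      inv_eq_of_mul_eq_one_right hsplit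
    rw [hinv, Finset.prod_Ico_succ_top hkn]
    have key : ∀ i, k ≤ i → i ≤ n → (g i)⁻¹ * d ≤ s i := by
      intro i hki hin
      have hgi := hgpos i hin
      have h1 : d ≤ s i * g i := by
        calc d ≤ g j := hjd
          _ = 1 * g j := (one_mul _).symm
          _ ≤ s j * g j := by
            apply mul_le_mul_of_nonneg_right (hs1 j (by omega))
            exact le_of_lt (hgpos j (by omega))
          _ ≤ s i * g i := chain j i (by omega) hin
      rw [mul_comm, ← div_eq_mul_inv, div_le_iff₀ hgi]
      exact h1
    have hstep1 : ∏ i ∈ Finset.Ico k n, ((g i)⁻¹ * d) ≤ ∏ i ∈ Finset.Ico k n, s i := by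
      apply Finset.prod_le_prod
      · intro i hi
        have := hgpos i (by simp only [Finset.mem_Ico] at hi; omega)
        positivity
      · intro i hi
        simp only [Finset.mem_Ico] at hi
        exact key i hi.1 (by omega)
    have hstep2 : ∏ i ∈ Finset.Ico k n, s i ≤ ∏ i ∈ Finset.Ico 1 n, s i := by
      rw [← Finset.prod_Ico_consecutive _ hk1 hkn]
      have hone : 1 ≤ ∏ i ∈ Finset.Ico 1 k, s i := by
        calc (1:ℝ) = ∏ _i ∈ Finset.Ico 1 k, (1:ℝ) := by simp
          _ ≤ ∏ i ∈ Finset.Ico 1 k, s i := by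
            apply Finset.prod_le_prod (fun i _ => zero_le_one)
            intro i hi
            simp only [Finset.mem_Ico] at hi
            exact hs1 i (by omega)
      have hnn : 0 ≤ ∏ i ∈ Finset.Ico k n, s i := by
        apply Finset.prod_nonneg
        intro i hi
        simp only [Finset.mem_Ico] at hi
        linarith [hs1 i (by omega)]
      nlinarith
    have hgn := hgpos n le_rfl
    calc (∏ i ∈ Finset.Ico k n, ((g i)⁻¹ * d)) * ((g n)⁻¹ * d)
        ≤ (∏ i ∈ Finset.Ico 1 n, s i) * ((g n)⁻¹ * d) := by
          apply mul_le_mul_of_nonneg_right (le_trans hstep1 hstep2)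
          positivity
      _ = (g n)⁻¹ * d * ∏ i ∈ Finset.Ico 1 n, s i := mul_comm _ _
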